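/- Let 1 ≤ q, p < ∞. Suppose X = (X,d,ν,μ) is a connected metric two-measure space and there is a constant C₁ > 0 such that (⨍_B |u − u_{B;ν}|^q dν)^{1/q} ≤ C₁ diam(B) ((1/μ(B)) ∫_X g^p dμ)^{1/p} holds whenever B is a ball in X, u : X → ℝ is a Lipschitz function with bounded support, and g is a p-weak upper gradient of u. Then X satisfies a (q,p)-balance condition, with constant depending only on q, p, the doubling constants of ν and μ, and C₁. -/

import Mathlib

open MeasureTheory Metric Set ENNReal NNReal

noncomputable section

/-- `ν` is doubling with constant `c`. -/
def IsDoubling {X : Type*} [MetricSpace X] [MeasurableSpace X]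
    (ν : Measure X) (c : ℝ) : Prop :=
  ∀ (x : X) (r : ℝ), 0 < r → ν (Metric.ball x (2 * r)) ≤ ENNReal.ofReal c * ν (Metric.ball x r)

/-- `ν` is positive and finite on all balls. -/
def FinitePosOnBalls {X : Type*} [MetricSpace X] [MeasurableSpace X]
    (ν : Measure X) : Prop :=
  ∀ (x : X) (r : ℝ), 0 < r → 0 < ν (Metric.ball x r) ∧ ν (Metric.ball x r) < ⊤

/-- The `(q,p)`-balance condition with constant `C`:
`(diam B'/diam B) (ν B'/ν B)^{1/q} ≤ C^{1/p} (μ B'/μ B)^{1/p}` for all balls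
`B`, `B' = B(x',r')` with `x' ∈ B` and `0 < r' ≤ diam B`. -/
def Balance {X : Type*} [MetricSpace X] [MeasurableSpace X]
    (ν μ : Measure X) (q p C : ℝ) : Prop :=
  ∀ (x : X) (R : ℝ) (x' : X) (r' : ℝ), 0 < R → x' ∈ Metric.ball x R → 0 < r' →
    r' ≤ Metric.diam (Metric.ball x R) →
    (Metric.diam (Metric.ball x' r') / Metric.diam (Metric.ball x R)) *
        ((ν (Metric.ball x' r')).toReal / (ν (Metric.ball x R)).toReal) ^ (1 / q)
      ≤ C ^ (1 / p) *
        ((μ (Metric.ball x' r')).toReal / (μ (Metric.ball x R)).toReal) ^ (1 / p)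

/-- The `p`-balance condition with constant `C`:
`(diam B'/diam B)^p (ν B'/ν B) ≤ C (μ B'/μ B)` for all balls
`B`, `B' = B(x',r')` with `x' ∈ B` and `0 < r' ≤ diam B`. -/
def PBalance {X : Type*} [MetricSpace X] [MeasurableSpace X]
    (ν μ : Measure X) (p C : ℝ) : Prop :=
  ∀ (x : X) (R : ℝ) (x' : X) (r' : ℝ), 0 < R → x' ∈ Metric.ball x R → 0 < r' →
    r' ≤ Metric.diam (Metric.ball x R) →
    (Metric.diam (Metric.ball x' r') / Metric.diam (Metric.ball x R)) ^ p *
        ((ν (Metric.ball x' r')).toReal / (ν (Metric.ball x R)).toReal)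
      ≤ C * ((μ (Metric.ball x' r')).toReal / (μ (Metric.ball x R)).toReal)

/-- A (rectifiable, arc-length parametrized) curve in `X`: a `1`-Lipschitz map
from `[0, len]` to `X` with `len > 0`. -/
structure Curve (X : Type*) [MetricSpace X] where
  len : ℝ
  len_pos : 0 < len
  toFun : ℝ → X
  speed : ∀ s ∈ Set.Icc (0 : ℝ) len, ∀ t ∈ Set.Icc (0 : ℝ) len,
    dist (toFun s) (toFun t) ≤ |s - t|

/-- The curve integral `∫_γ g ds` for an arc-length parametrized curve. -/
def curveLint {X : Type*} [MetricSpace X] (γ : Curve X) (g : X → ℝ≥0∞) : ℝ≥0∞ :=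
  ∫⁻ t in Set.Icc (0 : ℝ) γ.len, g (γ.toFun t)

/-- `g` is a `p`-weak upper gradient of `u` (w.r.t. the measure `μ`): the upper
gradient inequality `|u(γ(0)) - u(γ(ℓ_γ))| ≤ ∫_γ g ds` holds for `p`-almost every
curve, i.e. there is a Borel `ρ ∈ L^p_loc(X; dμ)` such that `∫_γ ρ ds = ∞` for every
exceptional curve. -/
def IsWeakUpperGradient {X : Type*} [MetricSpace X] [MeasurableSpace X]
    (μ : Measure X) (p : ℝ) (u : X → ℝ) (g : X → ℝ≥0∞) : Prop :=
  Measurable g ∧ ∃ ρ : X → ℝ≥0∞, Measurable ρ ∧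
    (∀ (x : X) (r : ℝ), 0 < r → ∫⁻ y in Metric.ball x r, ρ y ^ p ∂μ < ⊤) ∧
    ∀ γ : Curve X, curveLint γ ρ ≠ ⊤ →
      ENNReal.ofReal |u (γ.toFun 0) - u (γ.toFun γ.len)| ≤ curveLint γ g


lemma doubling_iter {X : Type*} [MetricSpace X] [MeasurableSpace X]
    {ν : Measure X} {c : ℝ} (h : IsDoubling ν c) (k : ℕ) (x : X) (r : ℝ) (hr : 0 < r) :
    ν (Metric.ball x (2 ^ k * r)) ≤ ENNReal.ofReal c ^ k * ν (Metric.ball x r) := by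
  induction k generalizing r with
  | zero => simp
  | succ n ih =>
    have h1 : (2:ℝ) ^ (n+1) * r = 2 ^ n * (2 * r) := by ring
    rw [h1]
    calc ν (ball x (2 ^ n * (2 * r))) ≤ ENNReal.ofReal c ^ n * ν (ball x (2 * r)) :=
          ih (2 * r) (by positivity)
      _ ≤ ENNReal.ofReal c ^ n * (ENNReal.ofReal c * ν (ball x r)) := by
          gcongr
          exact h x r hr
      _ = ENNReal.ofReal c ^ (n+1) * ν (ball x r) := by ring

lemma curve_lower {X : Type*} [MetricSpace X] (γ : Curve X) (g : X → ℝ≥0∞)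
    {c d : ℝ} (hc : 0 ≤ c) (hcd : c ≤ d) (hd : d ≤ γ.len) {v : ℝ≥0∞}
    (hg : ∀ t ∈ Set.Icc c d, g (γ.toFun t) = v) :
    v * ENNReal.ofReal (d - c) ≤ curveLint γ g := by
  have h1 : ∫⁻ t in Set.Icc c d, g (γ.toFun t) = v * ENNReal.ofReal (d - c) := by
    rw [setLIntegral_congr_fun measurableSet_Icc (fun t ht => hg t ht),
      setLIntegral_const, Real.volume_Icc]
  rw [← h1]
  exact lintegral_mono_set (Set.Icc_subset_Icc hc hd)

/-- if a connected metric two-measure space supports the inequality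
`(⨍_B |u - u_{B;ν}|^q dν)^{1/q} ≤ C₁ diam(B) ((1/μ(B)) ∫_X g^p dμ)^{1/p}`
for all balls `B`, Lipschitz `u` with bounded support, and `p`-weak upper gradients
`g` of `u`, then it satisfies a `(q,p)`-balance condition, with constant depending
only on `q`, `p`, the doubling constants `c_ν`, `c_μ` and `C₁`. -/
theorem stmt9 (q p cν cμ C₁ : ℝ) (hq : 1 ≤ q) (hp : 1 ≤ p)
    (hcν : 1 < cν) (hcμ : 1 < cμ) (hC₁ : 0 < C₁) :
    ∃ C : ℝ, 0 < C ∧ ∀ (X : Type) [MetricSpace X] [MeasurableSpace X] [BorelSpace X]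
      (ν μ : Measure X), ConnectedSpace X →
      FinitePosOnBalls ν → FinitePosOnBalls μ →
      IsDoubling ν cν → IsDoubling μ cμ →
      (∀ (x : X) (r : ℝ), 0 < r → ∀ u : X → ℝ, (∃ L : ℝ≥0, LipschitzWith L u) →
        Bornology.IsBounded (Function.support u) →
        ∀ g : X → ℝ≥0∞, IsWeakUpperGradient μ p u g →
        ((ν (Metric.ball x r))⁻¹ *
            ∫⁻ y in Metric.ball x r,
              ENNReal.ofReal |u y - ⨍ z in Metric.ball x r, u z ∂ν| ^ q ∂ν) ^ (1 / q)
          ≤ ENNReal.ofReal (C₁ * Metric.diam (Metric.ball x r)) *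
            ((μ (Metric.ball x r))⁻¹ * ∫⁻ y, g y ^ p ∂μ) ^ (1 / p)) →
      Balance ν μ q p C := by
  have hq0 : (0:ℝ) < q := lt_of_lt_of_le one_pos hq
  have hp0 : (0:ℝ) < p := lt_of_lt_of_le one_pos hp
  have hcν0 : (0:ℝ) < cν := lt_trans one_pos hcν
  have hcμ0 : (0:ℝ) < cμ := lt_trans one_pos hcμ
  refine ⟨(max 1 (128 * C₁ * cμ * cν ^ 6)) ^ p, by positivity, ?_⟩
  intro X _ _ _ ν μ hconn hν hμ hνd hμd hPI
  intro x R x' r' hR hx'B hr' hr'le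
  set K : ℝ := 128 * C₁ * cμ * cν ^ 6 with hKdef
  have hKpos : 0 < K := by positivity
  have hxx' : dist x' x < R := mem_ball.1 hx'B
  have hR2 : (0:ℝ) < 2 * R := by linarith
  have hdB : Metric.diam (ball x R) ≤ 2 * R := Metric.diam_ball hR.le
  have hr2R : r' ≤ 2 * R := le_trans hr'le hdB
  have hDpos : 0 < Metric.diam (ball x R) := lt_of_lt_of_le hr' hr'le
  -- diam of the double ball is ≤ 4 * diam of the ball
  have hdB'' : Metric.diam (ball x (2 * R)) ≤ 4 * Metric.diam (ball x R) := by
    by_cases hall : ∀ y : X, dist y x < R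
    · have hBuniv : ball x R = Set.univ := eq_univ_of_forall fun y => mem_ball.2 (hall y)
      have hB''univ : ball x (2 * R) = Set.univ :=
        eq_univ_of_forall fun y => mem_ball.2 (lt_of_lt_of_le (hall y) (by linarith))
      rw [hB''univ, ← hBuniv]
      linarith [Metric.diam_nonneg (s := ball x R)]
    · push_neg at hall
      obtain ⟨w, hw⟩ := hall
      have hRle : R ≤ Metric.diam (ball x R) := by
        by_contra hlt
        push_neg at hlt
        set s : ℝ := (Metric.diam (ball x R) + R) / 2 with hs
        have hdnn : 0 ≤ Metric.diam (ball x R) := Metric.diam_nonneg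
        have hs1 : Metric.diam (ball x R) < s := by rw [hs]; linarith
        have hs2 : s < R := by rw [hs]; linarith
        have hs0 : 0 ≤ s := by rw [hs]; linarith
        have hcont : Continuous fun y : X => dist y x := continuous_id.dist continuous_const
        have hrange := intermediate_value_univ x w hcont
        have hsmem : s ∈ Set.Icc (dist x x) (dist w x) := by
          constructor
          · simpa using hs0
          · linarith
        obtain ⟨y, hy⟩ := hrange hsmem
        have hy' : dist y x = s := hy
        have hyB : y ∈ ball x R := mem_ball.2 (by rw [hy']; exact hs2)
        have hxB : x ∈ ball x R := mem_ball_self hR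
        have hd := Metric.dist_le_diam_of_mem Metric.isBounded_ball hyB hxB
        rw [hy'] at hd
        linarith
      calc Metric.diam (ball x (2 * R)) ≤ 2 * (2 * R) := Metric.diam_ball (by linarith)
        _ ≤ 4 * Metric.diam (ball x R) := by linarith
  -- a point z at distance r'/4 from x'
  obtain ⟨z, hzx'⟩ : ∃ z : X, dist z x' = r' / 4 := by
    obtain ⟨a, -, b, -, hab⟩ : ∃ a ∈ ball x R, ∃ b ∈ ball x R, r' / 2 < dist a b := by
      by_contra hcon
      push_neg at hcon
      have := Metric.diam_le_of_forall_dist_le (by positivity : (0:ℝ) ≤ r'/2)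
        (fun a ha b hb => hcon a ha b hb)
      linarith
    have hw : ∃ w : X, r' / 4 ≤ dist w x' := by
      by_contra hcon
      push_neg at hcon
      have h1 := hcon a
      have h2 := hcon b
      have h3 : dist a b ≤ dist a x' + dist x' b := dist_triangle a x' b
      rw [dist_comm x' b] at h3
      linarith
    obtain ⟨w, hw⟩ := hw
    have hcont : Continuous fun y : X => dist y x' := continuous_id.dist continuous_const
    have hrange := intermediate_value_univ x' w hcont
    have : r' / 4 ∈ Set.Icc (dist x' x') (dist w x') := by
      constructor
      · simpa using by positivity
      · exact hw
    exact hrange this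
  -- the test function u
  set u : X → ℝ := fun y => max 0 (1 - dist y x' / r') with hu
  have hu0 : ∀ y : X, 0 ≤ u y := fun y => le_max_left _ _
  have hu1 : ∀ y : X, u y ≤ 1 := by
    intro y
    apply max_le (by norm_num)
    have : 0 ≤ dist y x' / r' := div_nonneg dist_nonneg hr'.le
    linarith
  have huLip : ∀ a b : X, |u a - u b| ≤ dist a b / r' := by
    intro a b
    have h1 : |u a - u b| ≤ |(1 - dist a x' / r') - (1 - dist b x' / r')| := by
      rw [hu]
      simp only []
      rw [max_comm (0:ℝ) (1 - dist a x' / r'), max_comm (0:ℝ) (1 - dist b x' / r')]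
      exact abs_max_sub_max_le_abs _ _ _
    have h2 : (1 - dist a x' / r') - (1 - dist b x' / r') = (dist b x' - dist a x') / r' := by
      ring
    rw [h2, abs_div, abs_of_pos hr'] at h1
    have h3 : |dist b x' - dist a x'| ≤ dist b a := abs_dist_sub_le b a x'
    rw [dist_comm b a] at h3
    calc |u a - u b| ≤ |dist b x' - dist a x'| / r' := h1
      _ ≤ dist a b / r' := by gcongr
  have huzero : ∀ y : X, r' ≤ dist y x' → u y = 0 := by
    intro y hy
    have h1 : 1 - dist y x' / r' ≤ 0 := by
      rw [sub_nonpos, le_div_iff₀ hr']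
      linarith
    exact max_eq_left h1
  have hulow : ∀ y : X, dist y x' ≤ r' / 16 → 15 / 16 ≤ u y := by
    intro y hy
    have h1 : dist y x' / r' ≤ 1 / 16 := by
      rw [div_le_div_iff₀ hr' (by norm_num : (0:ℝ) < 16)]
      linarith
    calc (15:ℝ)/16 ≤ 1 - dist y x' / r' := by linarith
      _ ≤ u y := le_max_right _ _
  have huhigh : ∀ y : X, 3 * r' / 16 ≤ dist y x' → u y ≤ 13 / 16 := by
    intro y hy
    apply max_le (by norm_num)
    have h1 : 3 / 16 ≤ dist y x' / r' := by
      rw [le_div_iff₀ hr']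
      linarith
    linarith
  have huabs1 : ∀ y1 y2 : X, |u y1 - u y2| ≤ 1 := by
    intro y1 y2
    rw [abs_sub_le_iff]
    constructor
    · linarith [hu1 y1, hu0 y2]
    · linarith [hu1 y2, hu0 y1]
  -- Lipschitz
  have hLip : LipschitzWith (Real.toNNReal (1 / r')) u := by
    apply LipschitzWith.of_dist_le_mul
    intro a b
    rw [Real.dist_eq, Real.coe_toNNReal _ (by positivity)]
    calc |u a - u b| ≤ dist a b / r' := huLip a b
      _ = 1 / r' * dist a b := by ring
  -- support
  have hsupp : Function.support u ⊆ ball x' r' := by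
    intro y hy
    rw [Function.mem_support] at hy
    rw [mem_ball]
    by_contra hyB'
    push_neg at hyB'
    exact hy (huzero y hyB')
  -- the upper gradient g
  set g : X → ℝ≥0∞ := (ball x' (2 * r')).indicator (fun _ => ENNReal.ofReal (1 / r')) with hg
  have hgmeas : Measurable g := measurable_const.indicator measurableSet_ball
  have hgval : ∀ y ∈ ball x' (2 * r'), g y = ENNReal.ofReal (1 / r') := by
    intro y hy
    rw [hg]
    exact Set.indicator_of_mem hy _
  have hWUG : IsWeakUpperGradient μ p u g := by
    refine ⟨hgmeas, fun _ => 0, measurable_const, ?_, ?_⟩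
    · intro y0 r0 hr0
      simp [ENNReal.zero_rpow_of_pos hp0]
    · intro γ _
      have hℓ : 0 < γ.len := γ.len_pos
      have key : ∀ c d : ℝ, 0 ≤ c → c ≤ d → d ≤ γ.len →
          (∀ t ∈ Set.Icc c d, γ.toFun t ∈ ball x' (2 * r')) →
          ENNReal.ofReal ((d - c) / r') ≤ curveLint γ g := by
        intro c d h0 hcd hdl hmem
        have h1 := curve_lower γ g h0 hcd hdl (fun t ht => hgval _ (hmem t ht))
        calc ENNReal.ofReal ((d - c) / r')
            = ENNReal.ofReal (1 / r') * ENNReal.ofReal (d - c) := by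
              rw [← ENNReal.ofReal_mul (by positivity)]
              congr 1
              ring
          _ ≤ curveLint γ g := h1
      by_cases hℓr : γ.len ≤ r'
      · by_cases hnear : dist (γ.toFun 0) x' < r' ∨ dist (γ.toFun γ.len) x' < r'
        · have hmem : ∀ t ∈ Set.Icc (0:ℝ) γ.len, γ.toFun t ∈ ball x' (2 * r') := by
            intro t ht
            rw [mem_ball]
            obtain he | he := hnear
            · have hsp := γ.speed t ht 0 (Set.left_mem_Icc.2 hℓ.le)
              have htr := dist_triangle (γ.toFun t) (γ.toFun 0) x'
              have habs : |t - 0| ≤ γ.len := by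
                rw [sub_zero, abs_of_nonneg ht.1]
                exact ht.2
              linarith
            · have hsp := γ.speed t ht γ.len (Set.right_mem_Icc.2 hℓ.le)
              have htr := dist_triangle (γ.toFun t) (γ.toFun γ.len) x'
              have habs : |t - γ.len| ≤ γ.len := by
                rw [abs_of_nonpos (by linarith [ht.2])]
                linarith [ht.1]
              linarith
          have hΔ : |u (γ.toFun 0) - u (γ.toFun γ.len)| ≤ (γ.len - 0) / r' := by
            have h1 := huLip (γ.toFun 0) (γ.toFun γ.len)
            have hsp := γ.speed 0 (Set.left_mem_Icc.2 hℓ.le) γ.len (Set.right_mem_Icc.2 hℓ.le)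
            have habs : |0 - γ.len| = γ.len := by
              rw [abs_of_nonpos (by linarith)]
              ring
            rw [habs] at hsp
            calc |u (γ.toFun 0) - u (γ.toFun γ.len)| ≤ dist (γ.toFun 0) (γ.toFun γ.len) / r' := h1
              _ ≤ (γ.len - 0) / r' := by rw [sub_zero]; gcongr
          exact le_trans (ENNReal.ofReal_le_ofReal hΔ) (key 0 γ.len le_rfl hℓ.le le_rfl hmem)
        · push_neg at hnear
          rw [huzero _ hnear.1, huzero _ hnear.2]
          simp
      · push_neg at hℓr
        by_cases h0 : dist (γ.toFun 0) x' < r'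
        · have hmem : ∀ t ∈ Set.Icc (0:ℝ) r', γ.toFun t ∈ ball x' (2 * r') := by
            intro t ht
            rw [mem_ball]
            have htI : t ∈ Set.Icc (0:ℝ) γ.len := ⟨ht.1, le_trans ht.2 hℓr.le⟩
            have hsp := γ.speed t htI 0 (Set.left_mem_Icc.2 hℓ.le)
            have htr := dist_triangle (γ.toFun t) (γ.toFun 0) x'
            have habs : |t - 0| ≤ r' := by
              rw [sub_zero, abs_of_nonneg ht.1]
              exact ht.2
            linarith
          have hΔ : |u (γ.toFun 0) - u (γ.toFun γ.len)| ≤ (r' - 0) / r' := by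
            rw [sub_zero, div_self hr'.ne']
            exact huabs1 _ _
          exact le_trans (ENNReal.ofReal_le_ofReal hΔ) (key 0 r' le_rfl hr'.le hℓr.le hmem)
        · by_cases hl : dist (γ.toFun γ.len) x' < r'
          · have hmem : ∀ t ∈ Set.Icc (γ.len - r') γ.len, γ.toFun t ∈ ball x' (2 * r') := by
              intro t ht
              rw [mem_ball]
              have htI : t ∈ Set.Icc (0:ℝ) γ.len := ⟨by linarith [ht.1], ht.2⟩
              have hsp := γ.speed t htI γ.len (Set.right_mem_Icc.2 hℓ.le)
              have htr := dist_triangle (γ.toFun t) (γ.toFun γ.len) x'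
              have habs : |t - γ.len| ≤ r' := by
                rw [abs_of_nonpos (by linarith [ht.2])]
                linarith [ht.1]
              linarith
            have hΔ : |u (γ.toFun 0) - u (γ.toFun γ.len)| ≤ (γ.len - (γ.len - r')) / r' := by
              have : (γ.len - (γ.len - r')) / r' = 1 := by
                field_simp
                ring
              rw [this]
              exact huabs1 _ _
            exact le_trans (ENNReal.ofReal_le_ofReal hΔ)
              (key (γ.len - r') γ.len (by linarith) (by linarith) le_rfl hmem)
          · push_neg at h0 hl
            rw [huzero _ h0, huzero _ hl]
            simp
  -- measure positivity/finiteness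
  obtain ⟨hνB'pos, hνB'fin⟩ := hν x' r' hr'
  obtain ⟨hνBpos, hνBfin⟩ := hν x R hR
  obtain ⟨hμB'pos, hμB'fin⟩ := hμ x' r' hr'
  obtain ⟨hμBpos, hμBfin⟩ := hμ x R hR
  have hcne0 : ENNReal.ofReal cν ≠ 0 := by
    simp only [ne_eq, ENNReal.ofReal_eq_zero, not_le]
    exact hcν0
  have hcnetop : ENNReal.ofReal cν ≠ ⊤ := ENNReal.ofReal_ne_top
  -- apply the Poincaré inequality
  have hPIa := hPI x (2 * R) hR2 u ⟨Real.toNNReal (1 / r'), hLip⟩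
    (Metric.isBounded_ball.subset hsupp) g hWUG
  set a : ℝ := ⨍ z in ball x (2 * R), u z ∂ν with ha
  -- measurability of the integrand
  have hmeasf : Measurable fun y => ENNReal.ofReal |u y - a| ^ q :=
    (ENNReal.measurable_ofReal.comp (hLip.continuous.sub continuous_const).abs.measurable).pow
      measurable_const
  have key_int : ∀ S : Set X, S ⊆ ball x (2 * R) → (∀ y ∈ S, 1 / 16 ≤ |u y - a|) →
      ENNReal.ofReal (1 / 16) ^ q * ν S
        ≤ ∫⁻ y in ball x (2 * R), ENNReal.ofReal |u y - a| ^ q ∂ν := by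
    intro S hSB hS
    calc ENNReal.ofReal (1 / 16) ^ q * ν S = ∫⁻ _ in S, ENNReal.ofReal (1 / 16) ^ q ∂ν :=
        (setLIntegral_const _ _).symm
      _ ≤ ∫⁻ y in S, ENNReal.ofReal |u y - a| ^ q ∂ν :=
        setLIntegral_mono hmeasf fun y hy =>
          ENNReal.rpow_le_rpow (ENNReal.ofReal_le_ofReal (hS y hy)) hq0.le
      _ ≤ _ := lintegral_mono_set hSB
  -- the two candidate small balls sit inside the double ball
  have hSx_sub : ball x' (r' / 16) ⊆ ball x (2 * R) := by
    intro y hy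
    rw [mem_ball] at hy ⊢
    calc dist y x ≤ dist y x' + dist x' x := dist_triangle _ _ _
      _ < r' / 16 + R := by linarith
      _ ≤ 2 * R := by linarith
  have hSz_sub : ball z (r' / 16) ⊆ ball x (2 * R) := by
    intro y hy
    rw [mem_ball] at hy ⊢
    calc dist y x ≤ dist y z + dist z x' + dist x' x := dist_triangle4 _ _ _ _
      _ < r' / 16 + r' / 4 + R := by rw [hzx'] at *; linarith
      _ ≤ 2 * R := by linarith
  -- main lower bound for the oscillation integral
  have hmain : ENNReal.ofReal (1 / 16) ^ q * (ν (ball x' r') / ENNReal.ofReal cν ^ 5)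
      ≤ ∫⁻ y in ball x (2 * R), ENNReal.ofReal |u y - a| ^ q ∂ν := by
    rcases le_or_gt a (7 / 8) with hA | hA
    · have hval : ∀ y ∈ ball x' (r' / 16), 1 / 16 ≤ |u y - a| := by
        intro y hy
        have h15 := hulow y (le_of_lt (mem_ball.1 hy))
        calc (1:ℝ) / 16 ≤ u y - a := by linarith
          _ ≤ |u y - a| := le_abs_self _
      have hν5 : ν (ball x' r') ≤ ENNReal.ofReal cν ^ 5 * ν (ball x' (r' / 16)) := by
        have h1 : ball x' r' ⊆ ball x' (2 ^ 5 * (r' / 16)) :=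
          Metric.ball_subset_ball (by linarith)
        calc ν (ball x' r') ≤ ν (ball x' (2 ^ 5 * (r' / 16))) := measure_mono h1
          _ ≤ _ := doubling_iter hνd 5 x' _ (by positivity)
      have hdiv : ν (ball x' r') / ENNReal.ofReal cν ^ 5 ≤ ν (ball x' (r' / 16)) :=
        ENNReal.div_le_of_le_mul (by rwa [mul_comm] at hν5)
      calc ENNReal.ofReal (1 / 16) ^ q * (ν (ball x' r') / ENNReal.ofReal cν ^ 5)
          ≤ ENNReal.ofReal (1 / 16) ^ q * ν (ball x' (r' / 16)) := by gcongr
        _ ≤ _ := key_int _ hSx_sub hval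
    · have hval : ∀ y ∈ ball z (r' / 16), 1 / 16 ≤ |u y - a| := by
        intro y hy
        have hdzy : dist z y < r' / 16 := by rw [dist_comm]; exact mem_ball.1 hy
        have htr : dist z x' ≤ dist z y + dist y x' := dist_triangle _ _ _
        have h13 := huhigh y (by rw [hzx'] at htr; linarith)
        have h0y := hu0 y
        calc (1:ℝ) / 16 ≤ a - u y := by linarith
          _ ≤ |u y - a| := by rw [abs_sub_comm]; exact le_abs_self _
      have hν5 : ν (ball x' r') ≤ ENNReal.ofReal cν ^ 5 * ν (ball z (r' / 16)) := by
        have h1 : ball x' r' ⊆ ball z (2 ^ 5 * (r' / 16)) := by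
          intro y hy
          rw [mem_ball] at hy ⊢
          have hxz : dist x' z = r' / 4 := by rw [dist_comm]; exact hzx'
          calc dist y z ≤ dist y x' + dist x' z := dist_triangle _ _ _
            _ < r' + r' / 4 := by rw [hxz]; linarith
            _ ≤ 2 ^ 5 * (r' / 16) := by norm_num; linarith
        calc ν (ball x' r') ≤ ν (ball z (2 ^ 5 * (r' / 16))) := measure_mono h1
          _ ≤ _ := doubling_iter hνd 5 z _ (by positivity)
      have hdiv : ν (ball x' r') / ENNReal.ofReal cν ^ 5 ≤ ν (ball z (r' / 16)) :=
        ENNReal.div_le_of_le_mul (by rwa [mul_comm] at hν5)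
      calc ENNReal.ofReal (1 / 16) ^ q * (ν (ball x' r') / ENNReal.ofReal cν ^ 5)
          ≤ ENNReal.ofReal (1 / 16) ^ q * ν (ball z (r' / 16)) := by gcongr
        _ ≤ _ := key_int _ hSz_sub hval
  -- lower bound for the left-hand side of the PI
  have hLHS : ENNReal.ofReal (1 / 16) *
      (ν (ball x' r') / (ENNReal.ofReal cν ^ 6 * ν (ball x R))) ^ (1 / q)
      ≤ ((ν (ball x (2 * R)))⁻¹ *
          ∫⁻ y in ball x (2 * R), ENNReal.ofReal |u y - a| ^ q ∂ν) ^ (1 / q) := by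
    have h2 : (ENNReal.ofReal cν * ν (ball x R))⁻¹ ≤ (ν (ball x (2 * R)))⁻¹ :=
      ENNReal.inv_le_inv' (hνd x R hR)
    have h1 : ENNReal.ofReal (1 / 16) ^ q *
        (ν (ball x' r') / (ENNReal.ofReal cν ^ 6 * ν (ball x R)))
        ≤ (ν (ball x (2 * R)))⁻¹ *
          ∫⁻ y in ball x (2 * R), ENNReal.ofReal |u y - a| ^ q ∂ν := by
      have heq : ENNReal.ofReal (1 / 16) ^ q *
          (ν (ball x' r') / (ENNReal.ofReal cν ^ 6 * ν (ball x R)))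
          = (ENNReal.ofReal cν * ν (ball x R))⁻¹ *
            (ENNReal.ofReal (1 / 16) ^ q * (ν (ball x' r') / ENNReal.ofReal cν ^ 5)) := by
        rw [div_eq_mul_inv (ν (ball x' r')), div_eq_mul_inv (ν (ball x' r')),
          ENNReal.mul_inv (Or.inl (pow_ne_zero 6 hcne0)) (Or.inl (ENNReal.pow_ne_top hcnetop)),
          ENNReal.mul_inv (Or.inl hcne0) (Or.inl hcnetop),
          ENNReal.inv_pow, ENNReal.inv_pow]
        ring
      rw [heq]
      exact mul_le_mul' h2 hmain
    calc ENNReal.ofReal (1 / 16) *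
        (ν (ball x' r') / (ENNReal.ofReal cν ^ 6 * ν (ball x R))) ^ (1 / q)
        = (ENNReal.ofReal (1 / 16) ^ q *
          (ν (ball x' r') / (ENNReal.ofReal cν ^ 6 * ν (ball x R)))) ^ (1 / q) := by
          rw [ENNReal.mul_rpow_of_nonneg _ _ (by positivity : (0:ℝ) ≤ 1 / q),
            ← ENNReal.rpow_mul, mul_one_div, div_self hq0.ne', ENNReal.rpow_one]
      _ ≤ _ := ENNReal.rpow_le_rpow h1 (by positivity)
  -- upper bound for the right-hand side of the PI
  have hJ : (∫⁻ y, g y ^ p ∂μ) = ENNReal.ofReal (1 / r') ^ p * μ (ball x' (2 * r')) := by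
    have hcong : ∀ y, g y ^ p
        = (ball x' (2 * r')).indicator (fun _ => ENNReal.ofReal (1 / r') ^ p) y := by
      intro y
      by_cases hy : y ∈ ball x' (2 * r')
      · rw [hgval y hy, Set.indicator_of_mem hy]
      · rw [hg, Set.indicator_of_notMem hy, Set.indicator_of_notMem hy]
        exact ENNReal.zero_rpow_of_pos hp0
    rw [lintegral_congr hcong, lintegral_indicator measurableSet_ball, setLIntegral_const]
  have hRHS : ENNReal.ofReal (C₁ * Metric.diam (ball x (2 * R))) *
      ((μ (ball x (2 * R)))⁻¹ * ∫⁻ y, g y ^ p ∂μ) ^ (1 / p)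
      ≤ ENNReal.ofReal (4 * C₁ * Metric.diam (ball x R)) *
        (ENNReal.ofReal (1 / r') *
          (ENNReal.ofReal cμ * (μ (ball x' r') / μ (ball x R)) ^ (1 / p))) := by
    have hμ2 : μ (ball x' (2 * r')) ≤ ENNReal.ofReal cμ * μ (ball x' r') := hμd x' r' hr'
    have hμmono : (μ (ball x (2 * R)))⁻¹ ≤ (μ (ball x R))⁻¹ :=
      ENNReal.inv_le_inv' (measure_mono (Metric.ball_subset_ball (by linarith)))
    have h1 : (μ (ball x (2 * R)))⁻¹ * ∫⁻ y, g y ^ p ∂μ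
        ≤ ENNReal.ofReal (1 / r') ^ p *
          (ENNReal.ofReal cμ * (μ (ball x' r') / μ (ball x R))) := by
      rw [hJ]
      calc (μ (ball x (2 * R)))⁻¹ * (ENNReal.ofReal (1 / r') ^ p * μ (ball x' (2 * r')))
          ≤ (μ (ball x R))⁻¹ *
            (ENNReal.ofReal (1 / r') ^ p * (ENNReal.ofReal cμ * μ (ball x' r'))) :=
          mul_le_mul' hμmono (mul_le_mul' le_rfl hμ2)
        _ = ENNReal.ofReal (1 / r') ^ p *
            (ENNReal.ofReal cμ * (μ (ball x' r') / μ (ball x R))) := by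
          rw [div_eq_mul_inv (μ (ball x' r'))]; ring
    have h2 : ((μ (ball x (2 * R)))⁻¹ * ∫⁻ y, g y ^ p ∂μ) ^ (1 / p)
        ≤ ENNReal.ofReal (1 / r') *
          (ENNReal.ofReal cμ * (μ (ball x' r') / μ (ball x R)) ^ (1 / p)) := by
      calc ((μ (ball x (2 * R)))⁻¹ * ∫⁻ y, g y ^ p ∂μ) ^ (1 / p)
          ≤ (ENNReal.ofReal (1 / r') ^ p *
            (ENNReal.ofReal cμ * (μ (ball x' r') / μ (ball x R)))) ^ (1 / p) :=
            ENNReal.rpow_le_rpow h1 (by positivity)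
        _ = ENNReal.ofReal (1 / r') *
            (ENNReal.ofReal cμ ^ (1 / p) * (μ (ball x' r') / μ (ball x R)) ^ (1 / p)) := by
            rw [ENNReal.mul_rpow_of_nonneg _ _ (by positivity : (0:ℝ) ≤ 1 / p),
              ENNReal.mul_rpow_of_nonneg _ _ (by positivity : (0:ℝ) ≤ 1 / p),
              ← ENNReal.rpow_mul, mul_one_div, div_self hp0.ne', ENNReal.rpow_one]
        _ ≤ ENNReal.ofReal (1 / r') *
            (ENNReal.ofReal cμ * (μ (ball x' r') / μ (ball x R)) ^ (1 / p)) := by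
            gcongr
            calc ENNReal.ofReal cμ ^ (1 / p) ≤ ENNReal.ofReal cμ ^ (1:ℝ) :=
                ENNReal.rpow_le_rpow_of_exponent_le (ENNReal.one_le_ofReal.2 hcμ.le)
                  ((div_le_one hp0).2 hp)
              _ = ENNReal.ofReal cμ := ENNReal.rpow_one _
    have h3 : ENNReal.ofReal (C₁ * Metric.diam (ball x (2 * R)))
        ≤ ENNReal.ofReal (4 * C₁ * Metric.diam (ball x R)) := by
      apply ENNReal.ofReal_le_ofReal
      nlinarith [hdB'']
    exact mul_le_mul' h3 h2
  -- combine
  have hcomb : ENNReal.ofReal (1 / 16) *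
      (ν (ball x' r') / (ENNReal.ofReal cν ^ 6 * ν (ball x R))) ^ (1 / q)
      ≤ ENNReal.ofReal (4 * C₁ * Metric.diam (ball x R)) *
        (ENNReal.ofReal (1 / r') *
          (ENNReal.ofReal cμ * (μ (ball x' r') / μ (ball x R)) ^ (1 / p))) :=
    hLHS.trans (hPIa.trans hRHS)
  -- convert to a real inequality
  have hratμ_ne_top : μ (ball x' r') / μ (ball x R) ≠ ⊤ :=
    (ENNReal.div_lt_top hμB'fin.ne hμBpos.ne').ne
  have hRHSfin : ENNReal.ofReal (4 * C₁ * Metric.diam (ball x R)) *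
      (ENNReal.ofReal (1 / r') *
        (ENNReal.ofReal cμ * (μ (ball x' r') / μ (ball x R)) ^ (1 / p))) ≠ ⊤ := by
    apply ENNReal.mul_ne_top ENNReal.ofReal_ne_top
    apply ENNReal.mul_ne_top ENNReal.ofReal_ne_top
    apply ENNReal.mul_ne_top ENNReal.ofReal_ne_top
    exact ENNReal.rpow_ne_top_of_nonneg (by positivity) hratμ_ne_top
  have hreal0 := ENNReal.toReal_mono hRHSfin hcomb
  have hTre : ((ν (ball x' r') / (ENNReal.ofReal cν ^ 6 * ν (ball x R))) ^ (1 / q)).toReal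
      = ((ν (ball x' r')).toReal / (cν ^ 6 * (ν (ball x R)).toReal)) ^ (1 / q) := by
    rw [← ENNReal.toReal_rpow, ENNReal.toReal_div, ENNReal.toReal_mul, ENNReal.toReal_pow,
      ENNReal.toReal_ofReal hcν0.le]
  have hMre : ((μ (ball x' r') / μ (ball x R)) ^ (1 / p)).toReal
      = ((μ (ball x' r')).toReal / (μ (ball x R)).toReal) ^ (1 / p) := by
    rw [← ENNReal.toReal_rpow, ENNReal.toReal_div]
  rw [ENNReal.toReal_mul, ENNReal.toReal_mul, ENNReal.toReal_mul, ENNReal.toReal_mul,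
    hTre, hMre, ENNReal.toReal_ofReal (by norm_num : (0:ℝ) ≤ 1 / 16),
    ENNReal.toReal_ofReal (mul_nonneg (by positivity) Metric.diam_nonneg),
    ENNReal.toReal_ofReal (by positivity : (0:ℝ) ≤ 1 / r'),
    ENNReal.toReal_ofReal hcμ0.le] at hreal0
  -- real abbreviations
  set n' : ℝ := (ν (ball x' r')).toReal with hn'def
  set nB : ℝ := (ν (ball x R)).toReal with hnBdef
  set m' : ℝ := (μ (ball x' r')).toReal with hm'def
  set mB : ℝ := (μ (ball x R)).toReal with hmBdef
  have hnB : 0 < nB := ENNReal.toReal_pos hνBpos.ne' hνBfin.ne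
  have hn'0 : 0 < n' := ENNReal.toReal_pos hνB'pos.ne' hνB'fin.ne
  have hmB : 0 < mB := ENNReal.toReal_pos hμBpos.ne' hμBfin.ne
  have hm'0 : 0 ≤ m' := ENNReal.toReal_nonneg
  have hnq : (0:ℝ) ≤ (n' / nB) ^ (1 / q) := Real.rpow_nonneg (by positivity) _
  have hmp : (0:ℝ) ≤ (m' / mB) ^ (1 / p) := Real.rpow_nonneg (by positivity) _
  have hc6 : (1:ℝ) ≤ cν ^ 6 := one_le_pow₀ hcν.le
  have hsplit : (n' / (cν ^ 6 * nB)) ^ (1 / q) = (n' / nB) ^ (1 / q) / (cν ^ 6) ^ (1 / q) := by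
    rw [show n' / (cν ^ 6 * nB) = n' / nB / cν ^ 6 by rw [div_div, mul_comm],
      Real.div_rpow (by positivity) (by positivity)]
  have hcq : ((cν : ℝ) ^ 6) ^ (1 / q) ≤ cν ^ 6 := by
    calc ((cν : ℝ) ^ 6) ^ (1 / q) ≤ ((cν : ℝ) ^ 6) ^ (1:ℝ) :=
        Real.rpow_le_rpow_of_exponent_le hc6 ((div_le_one hq0).2 hq)
      _ = cν ^ 6 := Real.rpow_one _
  have hcqpos : (0:ℝ) < ((cν : ℝ) ^ 6) ^ (1 / q) := Real.rpow_pos_of_pos (by positivity) _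
  have hstep : (n' / nB) ^ (1 / q) / cν ^ 6 ≤ (n' / (cν ^ 6 * nB)) ^ (1 / q) := by
    rw [hsplit]
    exact div_le_div_of_nonneg_left hnq hcqpos hcq
  have hA16 : (n' / (cν ^ 6 * nB)) ^ (1 / q)
      ≤ 16 * (4 * C₁ * Metric.diam (ball x R) * (1 / r' * (cμ * (m' / mB) ^ (1 / p)))) := by
    linarith
  have hkey : (n' / nB) ^ (1 / q)
      ≤ 16 * (4 * C₁ * Metric.diam (ball x R) * (1 / r' * (cμ * (m' / mB) ^ (1 / p)))) * cν ^ 6 := by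
    have h2 := hstep.trans hA16
    rwa [div_le_iff₀ (by positivity : (0:ℝ) < cν ^ 6)] at h2
  have hd' : Metric.diam (ball x' r') ≤ 2 * r' := Metric.diam_ball hr'.le
  have hCp : ((max 1 K : ℝ) ^ p) ^ (1 / p) = max 1 K := by
    rw [← Real.rpow_mul (le_trans zero_le_one (le_max_left 1 K)), mul_one_div,
      div_self hp0.ne', Real.rpow_one]
  rw [hCp]
  calc Metric.diam (ball x' r') / Metric.diam (ball x R) * (n' / nB) ^ (1 / q)
      ≤ 2 * r' / Metric.diam (ball x R) *
        (16 * (4 * C₁ * Metric.diam (ball x R) * (1 / r' * (cμ * (m' / mB) ^ (1 / p)))) * cν ^ 6) := by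
        apply mul_le_mul ?_ hkey hnq (by positivity)
        gcongr
    _ = K * (m' / mB) ^ (1 / p) := by
        rw [hKdef]
        field_simp
        ring
    _ ≤ max 1 K * (m' / mB) ^ (1 / p) := by
        apply mul_le_mul_of_nonneg_right (le_max_right _ _) hmp
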